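/- arXiv:1805.01751 — 4 statements merged into one kernel-verified Lean document; each statement's English description precedes it below -/
import Mathlib

section
/- Let u be an octonion and define the linear map m_u on O ⊕ O by m_u(x, x') = (x'·u, -x·ū), where ū is the conjugate of u. Then m_u ∘ m_u = -|u|² · Id. -/
open Quaternion

noncomputable section

/-- The octonions, via the Cayley–Dickson construction on the quaternions. -/
def O : Type := ℍ[ℝ] × ℍ[ℝ]

namespace O

instance : AddCommGroup O := inferInstanceAs (AddCommGroup (ℍ[ℝ] × ℍ[ℝ]))
instance : Module ℝ O := inferInstanceAs (Module ℝ (ℍ[ℝ] × ℍ[ℝ]))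

def mk (a b : ℍ[ℝ]) : O := (a, b)
def fst (x : O) : ℍ[ℝ] := Prod.fst x
def snd (x : O) : ℍ[ℝ] := Prod.snd x

instance : One O := ⟨mk 1 0⟩
/-- Cayley–Dickson multiplication. -/
instance : Mul O := ⟨fun x y =>
  mk (fst x * fst y - star (snd y) * snd x) (snd y * fst x + snd x * star (fst y))⟩

/-- Octonion conjugation. -/
def conj (x : O) : O := mk (star (fst x)) (-(snd x))

/-- The standard inner product on `O ≅ ℝ⁸`. -/
def inner (x y : O) : ℝ := (Inner.inner ℝ (fst x) (fst y) : ℝ) + (Inner.inner ℝ (snd x) (snd y) : ℝ)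

def normSq (x : O) : ℝ := inner x x
def norm (x : O) : ℝ := Real.sqrt (normSq x)

/-- The map `m_u` on `O ⊕ O`, given by `m_u (x, x') = (x'·u, -x·ū)`. -/
def m (u : O) : O × O → O × O := fun p => (p.2 * u, -(p.1 * conj u))

/-- The standard inner product on `O ⊕ O`. -/
def innerPair (p q : O × O) : ℝ := inner p.1 q.1 + inner p.2 q.2

end O


lemma O.ext {x y : O} (h1 : O.fst x = O.fst y) (h2 : O.snd x = O.snd y) : x = y :=
  Prod.ext h1 h2

lemma O.mul_def (x y : O) : x * y =
    O.mk (O.fst x * O.fst y - star (O.snd y) * O.snd x)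
         (O.snd y * O.fst x + O.snd x * star (O.fst y)) := rfl

@[simp] lemma O.fst_mk (a b : ℍ[ℝ]) : O.fst (O.mk a b) = a := rfl
@[simp] lemma O.snd_mk (a b : ℍ[ℝ]) : O.snd (O.mk a b) = b := rfl
@[simp] lemma O.fst_smul (r : ℝ) (x : O) : O.fst (r • x) = r • O.fst x := rfl
@[simp] lemma O.snd_smul (r : ℝ) (x : O) : O.snd (r • x) = r • O.snd x := rfl
@[simp] lemma O.fst_conj (x : O) : O.fst (O.conj x) = star (O.fst x) := rfl
@[simp] lemma O.snd_conj (x : O) : O.snd (O.conj x) = -(O.snd x) := rfl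

lemma O.normSq_eq (u : O) :
    O.normSq u = Quaternion.normSq (O.fst u) + Quaternion.normSq (O.snd u) := by
  simp [O.normSq, O.inner, Quaternion.inner_self, Quaternion.normSq_eq_norm_mul_self, sq]

@[simp] lemma O.fst_neg (x : O) : O.fst (-x) = -O.fst x := rfl
@[simp] lemma O.snd_neg (x : O) : O.snd (-x) = -O.snd x := rfl

lemma O.neg_mul' (x y : O) : (-x) * y = -(x * y) := by
  apply O.ext <;>
    { simp [O.mul_def, neg_mul, mul_neg, neg_sub, neg_add, sub_eq_add_neg]; abel }

lemma key1 (u z : O) : (z * O.conj u) * u = (O.normSq u) • z := by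
  apply O.ext <;>
  · simp only [O.mul_def, O.fst_mk, O.snd_mk, O.fst_conj, O.snd_conj, O.fst_smul, O.snd_smul,
      O.normSq_eq, star_neg, star_star, neg_mul, mul_neg, sub_neg_eq_add, neg_neg,
      star_mul, star_sub, star_add, sub_mul, add_mul, mul_sub, mul_add, mul_assoc,
      Quaternion.star_mul_self, Quaternion.self_mul_star]
    simp only [← mul_assoc, Quaternion.self_mul_star, Quaternion.star_mul_self,
      ← Quaternion.coe_commutes, ← mul_add, ← Quaternion.coe_add,
      ← Quaternion.coe_mul_eq_smul]
    simp only [Quaternion.coe_add, add_mul]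
    abel

lemma key2 (u z : O) : (z * u) * O.conj u = (O.normSq u) • z := by
  apply O.ext <;>
  · simp only [O.mul_def, O.fst_mk, O.snd_mk, O.fst_conj, O.snd_conj, O.fst_smul, O.snd_smul,
      O.normSq_eq, star_neg, star_star, neg_mul, mul_neg, sub_neg_eq_add, neg_neg,
      star_mul, star_sub, star_add, sub_mul, add_mul, mul_sub, mul_add, mul_assoc,
      Quaternion.star_mul_self, Quaternion.self_mul_star]
    simp only [← mul_assoc, Quaternion.self_mul_star, Quaternion.star_mul_self,
      ← Quaternion.coe_commutes, ← mul_add, ← Quaternion.coe_add,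
      ← Quaternion.coe_mul_eq_smul]
    simp only [Quaternion.coe_add, add_mul]
    abel

/-- For any octonion `u`, `m_u ∘ m_u = -|u|² Id` on `O ⊕ O`. -/
theorem m_comp_self (u : O) : ∀ p : O × O, O.m u (O.m u p) = (-(O.normSq u)) • p := by
  rintro ⟨x, y⟩
  refine Prod.ext ?_ ?_
  · show -(x * O.conj u) * u = -(O.normSq u) • x
    rw [O.neg_mul', key1, neg_smul]
  · show -(y * u * O.conj u) = -(O.normSq u) • y
    rw [key2, neg_smul]
end
end

section
/- If u and v are orthonormal octonions, then m_{u,v} = m_u ∘ m_v is a complex structure on O ⊕ O, i.e. m_{u,v} ∘ m_{u,v} = -Id. -/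
open Quaternion

noncomputable section

-- ### Auxiliary lemmas

namespace O

lemma L1 (a b : ℍ[ℝ]) : star a * b + star b * a = ((2 * (a * star b).re : ℝ) : ℍ[ℝ]) := by
  have h := Quaternion.self_add_star' (star b * a)
  rw [star_mul, star_star, add_comm] at h
  rw [h]
  congr 2
  simp [Quaternion.re_mul]; ring

lemma L2 (a b : ℍ[ℝ]) : a * star b + b * star a = ((2 * (a * star b).re : ℝ) : ℍ[ℝ]) := by
  have h := Quaternion.self_add_star' (a * star b)
  rw [star_mul, star_star] at h
  rw [h]

lemma cen (x : ℍ[ℝ]) (p q : ℝ) : x * (p : ℍ[ℝ]) + (q : ℍ[ℝ]) * x = (p + q) • x := by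
  rw [← Quaternion.coe_commutes, ← add_mul, ← Quaternion.coe_add, Quaternion.coe_mul_eq_smul]

lemma x_eq (x : O) : x = mk (fst x) (snd x) := rfl

lemma mk_mul_mk (a b c d : ℍ[ℝ]) :
    mk a b * mk c d = mk (a * c - star d * b) (d * a + b * star c) := rfl

lemma conj_mk (a b : ℍ[ℝ]) : conj (mk a b) = mk (star a) (-b) := rfl

lemma neg_mk (a b : ℍ[ℝ]) : -mk a b = mk (-a) (-b) := rfl

lemma mk_eq_mk {a b c d : ℍ[ℝ]} (h1 : a = c) (h2 : b = d) : mk a b = mk c d := by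
  rw [h1, h2]

lemma smul_mk (r : ℝ) (a b : ℍ[ℝ]) : r • mk a b = mk (r • a) (r • b) := rfl

lemma inner_mk (a b c d : ℍ[ℝ]) :
    inner (mk a b) (mk c d) = (a * star c).re + (b * star d).re := rfl

lemma polar1 (x₁ x₂ u₁ u₂ v₁ v₂ : ℍ[ℝ]) :
    (mk x₁ x₂ * conj (mk u₁ u₂)) * mk v₁ v₂ + (mk x₁ x₂ * conj (mk v₁ v₂)) * mk u₁ u₂
      = (2 * inner (mk u₁ u₂) (mk v₁ v₂)) • mk x₁ x₂ := by
  rw [conj_mk, conj_mk, mk_mul_mk, mk_mul_mk, mk_mul_mk, mk_mul_mk, inner_mk, smul_mk]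
  show mk _ _ + mk _ _ = _
  rw [show (mk (_ : ℍ[ℝ]) _ + mk _ _ : O) = mk _ _ from rfl]
  refine mk_eq_mk ?_ ?_ <;> dsimp only [mk]
  · have e1 : (x₁ * star u₁ - star (-u₂) * x₂) * v₁ -
        star v₂ * (-u₂ * x₁ + x₂ * star (star u₁)) +
        ((x₁ * star v₁ - star (-v₂) * x₂) * u₁ -
        star u₂ * (-v₂ * x₁ + x₂ * star (star v₁)))
        = x₁ * (star u₁ * v₁ + star v₁ * u₁) + (star u₂ * v₂ + star v₂ * u₂) * x₁ := by
      simp only [star_neg, star_star]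
      noncomm_ring
    rw [e1, L1 u₁ v₁, L1 u₂ v₂, cen]
    congr 1
    ring
  · have e2 : v₂ * (x₁ * star u₁ - star (-u₂) * x₂) +
        (-u₂ * x₁ + x₂ * star (star u₁)) * star v₁ +
        (u₂ * (x₁ * star v₁ - star (-v₂) * x₂) +
        (-v₂ * x₁ + x₂ * star (star v₁)) * star u₁)
        = x₂ * (u₁ * star v₁ + v₁ * star u₁) + (u₂ * star v₂ + v₂ * star u₂) * x₂ := by
      simp only [star_neg, star_star]
      noncomm_ring
    rw [e2, L2 u₁ v₁, L2 u₂ v₂, cen]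
    congr 1
    ring

lemma polar2 (x₁ x₂ u₁ u₂ v₁ v₂ : ℍ[ℝ]) :
    (mk x₁ x₂ * mk u₁ u₂) * conj (mk v₁ v₂) + (mk x₁ x₂ * mk v₁ v₂) * conj (mk u₁ u₂)
      = (2 * inner (mk u₁ u₂) (mk v₁ v₂)) • mk x₁ x₂ := by
  rw [conj_mk, conj_mk, mk_mul_mk, mk_mul_mk, mk_mul_mk, mk_mul_mk, inner_mk, smul_mk]
  rw [show (mk (_ : ℍ[ℝ]) _ + mk _ _ : O) = mk _ _ from rfl]
  refine mk_eq_mk ?_ ?_ <;> dsimp only [mk]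
  · have e1 : (x₁ * u₁ - star u₂ * x₂) * star v₁ -
        star (-v₂) * (u₂ * x₁ + x₂ * star u₁) +
        ((x₁ * v₁ - star v₂ * x₂) * star u₁ -
        star (-u₂) * (v₂ * x₁ + x₂ * star v₁))
        = x₁ * (u₁ * star v₁ + v₁ * star u₁) + (star u₂ * v₂ + star v₂ * u₂) * x₁ := by
      simp only [star_neg]
      noncomm_ring
    rw [e1, L2 u₁ v₁, L1 u₂ v₂, cen]
    congr 1
    ring
  · have e2 : -v₂ * (x₁ * u₁ - star u₂ * x₂) +
        (u₂ * x₁ + x₂ * star u₁) * star (star v₁) +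
        (-u₂ * (x₁ * v₁ - star v₂ * x₂) +
        (v₂ * x₁ + x₂ * star v₁) * star (star u₁))
        = x₂ * (star u₁ * v₁ + star v₁ * u₁) + (u₂ * star v₂ + v₂ * star u₂) * x₂ := by
      simp only [star_star]
      noncomm_ring
    rw [e2, L1 u₁ v₁, L2 u₂ v₂, cen]
    congr 1
    ring

lemma polar1' (x u v : O) :
    (x * conj u) * v + (x * conj v) * u = (2 * inner u v) • x := by
  rw [x_eq x, x_eq u, x_eq v]; exact polar1 _ _ _ _ _ _

lemma polar2' (x u v : O) :
    (x * u) * conj v + (x * v) * conj u = (2 * inner u v) • x := by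
  rw [x_eq x, x_eq u, x_eq v]; exact polar2 _ _ _ _ _ _

lemma normSq_eq_one {u : O} (hu : norm u = 1) : normSq u = 1 := by
  have h0 : 0 ≤ normSq u := by
    rw [x_eq u, normSq, inner_mk]
    have h1 := Quaternion.normSq_nonneg (a := fst u)
    have h2 := Quaternion.normSq_nonneg (a := snd u)
    rw [Quaternion.normSq_def] at h1 h2
    positivity
  have := hu
  rw [norm] at this
  nlinarith [Real.sq_sqrt h0, Real.sqrt_nonneg (normSq u)]

lemma two_smul_cancel {A B : O} (h : (2:ℝ) • A = (2:ℝ) • B) : A = B := by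
  have := smul_right_injective O (two_ne_zero (α := ℝ))
  exact this h

lemma mul_conj_self {u : O} (hu : norm u = 1) (x : O) : (x * u) * conj u = x := by
  have h := polar2' x u u
  rw [show inner u u = normSq u from rfl, normSq_eq_one hu, mul_one] at h
  apply two_smul_cancel
  rw [two_smul]
  exact h

lemma conj_mul_self {u : O} (hu : norm u = 1) (x : O) : (x * conj u) * u = x := by
  have h := polar1' x u u
  rw [show inner u u = normSq u from rfl, normSq_eq_one hu, mul_one] at h
  apply two_smul_cancel
  rw [two_smul]
  exact h

lemma anti1 {u v : O} (huv : inner u v = 0) (x : O) :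
    (x * conj u) * v = -((x * conj v) * u) := by
  have h := polar1' x u v
  rw [huv, mul_zero, zero_smul] at h
  exact eq_neg_of_add_eq_zero_left h
lemma anti2 {u v : O} (huv : inner u v = 0) (x : O) :
    (x * u) * conj v = -((x * v) * conj u) := by
  have h := polar2' x u v
  rw [huv, mul_zero, zero_smul] at h
  exact eq_neg_of_add_eq_zero_left h

lemma neg_mul'_s3 (a b : O) : (-a) * b = -(a * b) := by
  rw [x_eq a, x_eq b, neg_mk, mk_mul_mk, mk_mul_mk, neg_mk]
  exact mk_eq_mk (by noncomm_ring) (by noncomm_ring)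

lemma m_neg (u : O) (r : O × O) : m u (-r) = -(m u r) := by
  show ((-r).2 * u, -((-r).1 * conj u)) = -(r.2 * u, -(r.1 * conj u))
  rw [show ((-r).2 : O) = -(r.2) from rfl, show ((-r).1 : O) = -(r.1) from rfl,
    neg_mul'_s3, neg_mul'_s3]
  rw [Prod.neg_mk, neg_neg]

lemma m_m_self {u : O} (hu : norm u = 1) (p : O × O) : m u (m u p) = -p := by
  show ((-(p.1 * conj u)) * u, -((p.2 * u) * conj u)) = -p
  rw [neg_mul'_s3, conj_mul_self hu, mul_conj_self hu]
  rfl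

lemma m_anti {u v : O} (huv : inner u v = 0) (q : O × O) :
    m u (m v q) = -(m v (m u q)) := by
  show ((-(q.1 * conj v)) * u, -((q.2 * v) * conj u)) =
    -((-(q.1 * conj u)) * v, -((q.2 * u) * conj v))
  rw [neg_mul'_s3, neg_mul'_s3, Prod.neg_mk, neg_neg, anti1 huv q.1, anti2 huv q.2, neg_neg]

end O

/-- For orthonormal octonions `u, v`, `m_{u,v} = m_u ∘ m_v` is a complex structure on
`O ⊕ O`: `m_{u,v} ∘ m_{u,v} = -Id`. -/
theorem m_pair_complex_structure (u v : O) (hu : O.norm u = 1) (hv : O.norm v = 1)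
    (huv : O.inner u v = 0) :
    ∀ p : O × O, O.m u (O.m v (O.m u (O.m v p))) = -p := by
  intro p
  set q := O.m v p with hq
  have h1 : O.m v (O.m u q) = -(O.m u (O.m v q)) := by
    have h := O.m_anti huv q
    rw [h, neg_neg]
  rw [h1, O.m_neg, O.m_m_self hu, neg_neg, hq, O.m_m_self hv]
end
end

section
/- If u and v are orthogonal octonions, then the maps m_u and m_v on O ⊕ O anticommute: m_u ∘ m_v = -(m_v ∘ m_u). -/
open Quaternion

noncomputable section

namespace O

lemma fst_mul (x y : O) : fst (x * y) = fst x * fst y - star (snd y) * snd x := rfl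
lemma snd_mul (x y : O) : snd (x * y) = snd y * fst x + snd x * star (fst y) := rfl
lemma fst_conj_s4 (x : O) : fst (conj x) = star (fst x) := rfl
lemma snd_conj_s4 (x : O) : snd (conj x) = -(snd x) := rfl
lemma fst_neg_s4 (x : O) : fst (-x) = -(fst x) := rfl
lemma snd_neg_s4 (x : O) : snd (-x) = -(snd x) := rfl
lemma fst_add (x y : O) : fst (x + y) = fst x + fst y := rfl
lemma snd_add (x y : O) : snd (x + y) = snd x + snd y := rfl
lemma ext' (a b : O) (h1 : fst a = fst b) (h2 : snd a = snd b) : a = b := Prod.ext h1 h2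

lemma conj_conj (x : O) : conj (conj x) = x := by
  apply ext' <;> simp [fst_conj_s4, snd_conj_s4]

lemma neg_mul_o (x y : O) : (-x) * y = -(x * y) := by
  apply ext' <;>
    simp only [fst_mul, snd_mul, fst_neg_s4, snd_neg_s4, neg_mul, mul_neg, neg_add, neg_sub, sub_neg_eq_add, neg_neg] <;>
    abel

end O

private lemma quat_swapL (a b : ℍ) : star a * b + star b * a = ((2 * (a * star b).re : ℝ) : ℍ) := by
  have h1 : star b * a = star (star a * b) := by rw [star_mul, star_star]
  rw [h1, Quaternion.self_add_star']
  congr 1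
  simp only [Quaternion.re_mul, Quaternion.re_star, Quaternion.imI_star, Quaternion.imJ_star,
    Quaternion.imK_star]
  ring

private lemma quat_swapR (a b : ℍ) : a * star b + b * star a = ((2 * (a * star b).re : ℝ) : ℍ) := by
  have h1 : b * star a = star (a * star b) := by rw [star_mul, star_star]
  rw [h1, Quaternion.self_add_star']

lemma O.keyA (u v x : O) (h : O.inner u v = 0) : (x * conj v) * u = -((x * conj u) * v) := by
  have hre : (fst u * star (fst v)).re + (snd u * star (snd v)).re = 0 := h
  apply eq_neg_of_add_eq_zero_left
  have hre1 : (fst v * star (fst u)).re = (fst u * star (fst v)).re := by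
    simp only [Quaternion.re_mul, Quaternion.re_star, Quaternion.imI_star, Quaternion.imJ_star,
      Quaternion.imK_star]; ring
  apply ext'
  · simp only [fst_mul, snd_mul, fst_conj_s4, snd_conj_s4, fst_neg_s4, snd_neg_s4, fst_add, star_neg,
      star_star, neg_neg]
    trans (fst x * (star (fst v) * fst u + star (fst u) * fst v) +
      (star (snd u) * snd v + star (snd v) * snd u) * fst x)
    · noncomm_ring
    · rw [quat_swapL (fst v) (fst u), quat_swapL (snd u) (snd v), Quaternion.coe_commutes,
        ← mul_add, ← Quaternion.coe_add]
      have : 2 * (fst v * star (fst u)).re + 2 * (snd u * star (snd v)).re = 0 := by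
        rw [hre1]; linarith
      rw [this, Quaternion.coe_zero, mul_zero]; rfl
  · simp only [fst_mul, snd_mul, fst_conj_s4, snd_conj_s4, fst_neg_s4, snd_neg_s4, snd_add, star_neg,
      star_star, neg_neg]
    trans ((snd u * star (snd v) + snd v * star (snd u)) * snd x +
      snd x * (fst v * star (fst u) + fst u * star (fst v)))
    · noncomm_ring
    · rw [quat_swapR (snd u) (snd v), quat_swapR (fst v) (fst u), Quaternion.coe_commutes,
        ← mul_add, ← Quaternion.coe_add]
      have : 2 * (snd u * star (snd v)).re + 2 * (fst v * star (fst u)).re = 0 := by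
        rw [hre1]; linarith
      rw [this, Quaternion.coe_zero, mul_zero]; rfl

lemma O.inner_conj (u v : O) : O.inner (conj u) (conj v) = O.inner u v := by
  show (star (fst u) * star (star (fst v))).re + (-(snd u) * star (-(snd v))).re =
    (fst u * star (fst v)).re + (snd u * star (snd v)).re
  simp only [star_star, Quaternion.re_mul, Quaternion.re_star, Quaternion.imI_star,
    Quaternion.imJ_star, Quaternion.imK_star, Quaternion.re_neg, Quaternion.imI_neg,
    Quaternion.imJ_neg, Quaternion.imK_neg]
  ring

/-- For orthogonal octonions `u, v`, the maps `m_u` and `m_v` anticommute. -/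
theorem m_anticommute (u v : O) (h : O.inner u v = 0) :
    ∀ p : O × O, O.m u (O.m v p) = -(O.m v (O.m u p)) := by
  intro p
  simp only [O.m, Prod.neg_mk, Prod.mk.injEq]
  have hB := O.keyA (O.conj u) (O.conj v) p.2 (by rw [O.inner_conj]; exact h)
  rw [O.conj_conj, O.conj_conj] at hB
  refine ⟨?_, ?_⟩
  · rw [O.neg_mul_o, O.neg_mul_o, O.keyA u v p.1 h]
  · rw [hB, neg_neg]
end
end

section
/- If u and v are orthonormal octonions, then the map x ↦ (x·ū)·v is an orthogonal complex structure on O: it squares to -Id and preserves the Euclidean norm on O ≅ ℝ⁸. -/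
open Quaternion

noncomputable section

namespace OAux

lemma fst_mul (x y : O) : O.fst (x*y) = O.fst x * O.fst y - star (O.snd y) * O.snd x := rfl
lemma snd_mul (x y : O) : O.snd (x*y) = O.snd y * O.fst x + O.snd x * star (O.fst y) := rfl
lemma fst_conj (x : O) : O.fst (O.conj x) = star (O.fst x) := rfl
lemma snd_conj (x : O) : O.snd (O.conj x) = -(O.snd x) := rfl
lemma fst_add (x y : O) : O.fst (x+y) = O.fst x + O.fst y := rfl
lemma snd_add (x y : O) : O.snd (x+y) = O.snd x + O.snd y := rfl
lemma inner_eq (x y : O) : O.inner x y = (O.fst x * star (O.fst y)).re + (O.snd x * star (O.snd y)).re := rfl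

/-- The fundamental polarized composition identity. -/
lemma P1 (x y a b : O) :
    O.inner (x*a) (y*b) + O.inner (x*b) (y*a) = 2 * O.inner x y * O.inner a b := by
  simp only [inner_eq, fst_mul, snd_mul, fst_conj, snd_conj]
  simp [Quaternion.re_mul]
  ring

/-- The adjoint of right multiplication by `a` is right multiplication by `conj a`. -/
lemma P2 (x a y : O) : O.inner (x*a) y = O.inner x (y * O.conj a) := by
  simp only [inner_eq, fst_mul, snd_mul, fst_conj, snd_conj]
  simp [Quaternion.re_mul]
  ring

/-- Conjugation is an isometry. -/
lemma P3 (a b : O) : O.inner (O.conj a) (O.conj b) = O.inner a b := by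
  simp only [inner_eq, fst_conj, snd_conj]
  simp [Quaternion.re_mul]

lemma inner_comm (x y : O) : O.inner x y = O.inner y x := by
  simp only [inner_eq]
  simp [Quaternion.re_mul]
  ring

lemma inner_add_left (x y z : O) : O.inner (x+y) z = O.inner x z + O.inner y z := by
  simp only [inner_eq, fst_add, snd_add]
  simp [Quaternion.re_mul]
  ring

lemma inner_self_eq (x : O) :
    O.inner x x = Quaternion.normSq (O.fst x) + Quaternion.normSq (O.snd x) := by
  simp only [inner_eq]
  rw [Quaternion.self_mul_star, Quaternion.self_mul_star]
  simp

lemma inner_self_nonneg (x : O) : 0 ≤ O.inner x x := by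
  rw [inner_self_eq]
  have h1 := Quaternion.normSq_nonneg (a := O.fst x)
  have h2 := Quaternion.normSq_nonneg (a := O.snd x)
  linarith

lemma eq_zero_of_inner_self (x : O) (h : O.inner x x = 0) : x = 0 := by
  rw [inner_self_eq] at h
  have h1 := Quaternion.normSq_nonneg (a := O.fst x)
  have h2 := Quaternion.normSq_nonneg (a := O.snd x)
  have hf : O.fst x = 0 := Quaternion.normSq_eq_zero.1 (by linarith)
  have hs : O.snd x = 0 := Quaternion.normSq_eq_zero.1 (by linarith)
  show (O.fst x, O.snd x) = (0 : ℍ[ℝ] × ℍ[ℝ])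
  rw [hf, hs]; rfl

/-- `J` is an isometry on inner products. -/
lemma iso (u v : O) (hnu : O.inner u u = 1) (hnv : O.inner v v = 1) (x y : O) :
    O.inner ((x * O.conj u) * v) ((y * O.conj u) * v) = O.inner x y := by
  have h1 := P1 (x * O.conj u) (y * O.conj u) v v
  have h2 := P1 x y (O.conj u) (O.conj u)
  have h3 := P3 u u
  rw [hnv] at h1
  rw [h3, hnu] at h2
  linarith

/-- `J` is skew-adjoint. -/
lemma skew (u v : O) (huv : O.inner u v = 0) (x y : O) :
    O.inner ((x * O.conj u) * v) y + O.inner x ((y * O.conj u) * v) = 0 := by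
  have h1 := P2 (x * O.conj u) v y
  have h2 := P2 (y * O.conj u) v x
  have h3 := P1 x y (O.conj u) (O.conj v)
  have h4 := P3 u v
  have h5 := inner_comm x ((y * O.conj u) * v)
  have h6 := inner_comm (y * O.conj u) (x * O.conj v)
  rw [h4, huv] at h3
  linarith

end OAux


/-- For orthonormal octonions `u, v`, the map `x ↦ (x ū) v` is an orthogonal complex
structure on `O`. -/
theorem octonion_orthogonal_complex_structure (u v : O)
    (hu : O.norm u = 1) (hv : O.norm v = 1) (huv : O.inner u v = 0) :
    (∀ x : O, ((((x * O.conj u) * v) * O.conj u) * v) = -x) ∧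
    (∀ x : O, O.norm ((x * O.conj u) * v) = O.norm x) := by
  have hnu : O.inner u u = 1 := by
    have h := congrArg (· ^ 2) hu
    simpa [O.norm, O.normSq, Real.sq_sqrt (OAux.inner_self_nonneg u)] using h
  have hnv : O.inner v v = 1 := by
    have h := congrArg (· ^ 2) hv
    simpa [O.norm, O.normSq, Real.sq_sqrt (OAux.inner_self_nonneg v)] using h
  constructor
  · intro x
    set J2x := (((x * O.conj u) * v) * O.conj u) * v with hJ2x
    set z := J2x + x with hz
    have hzz : O.inner z z = 0 := by
      have h1 := OAux.inner_add_left J2x x z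
      have h2 := OAux.skew u v huv ((x * O.conj u) * v) z
      have h3 := OAux.iso u v hnu hnv x z
      -- h2 : ⟨J2x, z⟩ + ⟨Jx, Jz⟩ = 0, h3 : ⟨Jx, Jz⟩ = ⟨x, z⟩
      have h4 := OAux.inner_comm x z
      linarith
    have hz0 := OAux.eq_zero_of_inner_self z hzz
    rw [hz] at hz0
    exact eq_neg_of_add_eq_zero_left hz0
  · intro x
    have h := OAux.iso u v hnu hnv x x
    unfold O.norm O.normSq
    rw [h]
end
end
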